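/- Let C_3 be the triangle with vertices {0,1,2}, let P_3 be the path with vertices {a,b,c,d} and edges a–b, b–c, c–d, and let f : P_3 → C_3 be the graph homomorphism with f(a)=0, f(b)=1, f(c)=2, f(d)=0. Then for every digraph D without isolated points, every graph homomorphism χ : P_3 → D ⋆ (P_3, a, d) satisfying f_D ∘ χ = f is equal to φ_{(u,v)} for some edge (u,v) ∈ E(D). -/

import Mathlib

open SimpleGraph

attribute [local instance] Classical.propDecidable

/-- The vertex set of the arrow construction `D ⋆ H`: the disjoint union of `D` and
`E(D) × (V(H) ∖ {a, b})`, where `E(D)` is the set of edges of the digraph `(D, E)` and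
`a`, `b` are the two distinguished vertices of `H`. -/
def starVert (V : Type*) (a b : V) (D : Type*) (E : D → D → Prop) : Type _ :=
  D ⊕ ({p : D × D // E p.1 p.2} × {x : V // x ≠ a ∧ x ≠ b})

/-- For an edge `(u, v)` of the digraph `(D, E)`, the map
`φ_{(u,v)} : V(H) → V(D ⋆ H)` sending `a ↦ u`, `b ↦ v`, and `x ↦ (u, v, x)` otherwise. -/
noncomputable def starPhi {V : Type*} (a b : V) {D : Type*} {E : D → D → Prop}
    (u v : D) (huv : E u v) (x : V) : starVert V a b D E :=
  if hx : x = a then Sum.inl u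
  else if hx' : x = b then Sum.inl v
  else Sum.inr (⟨(u, v), huv⟩, ⟨x, hx, hx'⟩)

/-- The arrow construction `D ⋆ H` for a simple graph `H` with distinguished vertices
`a`, `b` and a digraph `(D, E)`: the edges are exactly the pairs
`(φ_{(u,v)} s, φ_{(u,v)} t)` for `(u, v) ∈ E(D)` and `(s, t) ∈ E(H)`. -/
noncomputable def starGraph {V : Type*} (H : SimpleGraph V) (a b : V)
    (D : Type*) (E : D → D → Prop) : SimpleGraph (starVert V a b D E) :=
  SimpleGraph.fromRel (fun x y => ∃ (u v : D) (huv : E u v) (s t : V),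
    H.Adj s t ∧ starPhi a b u v huv s = x ∧ starPhi a b u v huv t = y)

/-- Given a vertex map `f : V(H) → V(G)` (intended to satisfy `f a = f b`), the map
`f_D : V(D ⋆ H) → V(G)` sending every vertex of `D` to `f a` and `(u, v, y) ↦ f y`. -/
def starMap {V W : Type*} (f : V → W) (a b : V) {D : Type*} {E : D → D → Prop} :
    starVert V a b D E → W :=
  Sum.elim (fun _ => f a) (fun p => f p.2.val)

/-- Given a digraph homomorphism `h : (D₁, E₁) → (D₂, E₂)`, the map
`h ⋆ H : V(D₁ ⋆ H) → V(D₂ ⋆ H)` sending `x ↦ h x` for `x ∈ D₁` and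
`(u, v, w) ↦ (h u, h v, w)`. -/
def starMapHom {V : Type*} (a b : V) {D₁ D₂ : Type*}
    {E₁ : D₁ → D₁ → Prop} {E₂ : D₂ → D₂ → Prop}
    (h : D₁ → D₂) (hh : ∀ u v, E₁ u v → E₂ (h u) (h v)) :
    starVert V a b D₁ E₁ → starVert V a b D₂ E₂ :=
  Sum.elim (fun x => Sum.inl (h x))
    (fun p => Sum.inr (⟨(h p.1.val.1, h p.1.val.2), hh _ _ p.1.prop⟩, p.2))

section
variable {D : Type*} {E : D → D → Prop} {u v : D} {huv : E u v}

lemma phi_zero : starPhi (0:Fin 4) 3 u v huv 0 = Sum.inl u := by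
  rw [starPhi]; simp; rfl

lemma phi_three : starPhi (0:Fin 4) 3 u v huv 3 = Sum.inl v := by
  rw [starPhi]; simp; rfl

lemma phi_one : starPhi (0:Fin 4) 3 u v huv 1
    = Sum.inr (⟨(u,v),huv⟩, ⟨1, by decide, by decide⟩) := by
  rw [starPhi]; simp; rfl

lemma phi_two : starPhi (0:Fin 4) 3 u v huv 2
    = Sum.inr (⟨(u,v),huv⟩, ⟨2, by decide, by decide⟩) := by
  rw [starPhi]; simp; rfl

lemma phi_eq_inl {x : Fin 4} {w : D} (h : starPhi (0:Fin 4) 3 u v huv x = Sum.inl w) :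
    (x = 0 ∧ w = u) ∨ (x = 3 ∧ w = v) := by
  by_cases h0 : x = 0
  · subst h0; rw [phi_zero] at h; exact Or.inl ⟨rfl, (Sum.inl.inj h).symm⟩
  · by_cases h3 : x = 3
    · subst h3; rw [phi_three] at h; exact Or.inr ⟨rfl, (Sum.inl.inj h).symm⟩
    · rw [starPhi] at h; simp [h0, h3] at h

lemma phi_eq_inr {x : Fin 4} {q} (h : starPhi (0:Fin 4) 3 u v huv x = Sum.inr q) :
    q.1.val = (u, v) ∧ q.2.val = x := by
  by_cases h0 : x = 0
  · subst h0; rw [phi_zero] at h; exact absurd h (by simp)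
  · by_cases h3 : x = 3
    · subst h3; rw [phi_three] at h; exact absurd h (by simp)
    · rw [starPhi] at h; simp [h0, h3] at h
      obtain rfl := Sum.inr.inj h
      exact ⟨rfl, rfl⟩
end

/-- Let `C₃` be the triangle with vertices `{0,1,2}`, `P₃ = pathGraph 4` the path with
vertices `a,b,c,d = 0,1,2,3` and edges `a–b, b–c, c–d`, and `f : P₃ → C₃` the graph
homomorphism `f = ![0,1,2,0]` (so `f a = 0, f b = 1, f c = 2, f d = 0`). Then for every
digraph `(D, E)` without isolated points, every graph homomorphism
`χ : P₃ → D ⋆ (P₃, a, d)` with `f_D ∘ χ = f` equals `φ_{(u,v)}` for some edge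
`(u, v) ∈ E(D)`. -/
theorem stmt10 (D : Type*) (E : D → D → Prop)
    (hD : ∀ d : D, ∃ d', E d d' ∨ E d' d)
    (χ : pathGraph 4 →g starGraph (pathGraph 4) (0 : Fin 4) 3 D E)
    (hχ : ∀ x : Fin 4,
      starMap (![0, 1, 2, 0] : Fin 4 → Fin 3) 0 3 (χ x) = ![0, 1, 2, 0] x) :
    ∃ (u v : D) (huv : E u v), ∀ x : Fin 4, χ x = starPhi 0 3 u v huv x := by
  classical
  -- shape of χ 1
  obtain ⟨p1, e1⟩ : ∃ p, χ 1 = Sum.inr (p, ⟨1, by decide, by decide⟩) := by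
    have h1 := hχ 1
    rcases hc : χ 1 with d | ⟨p, y, hy0, hy3⟩
    · rw [hc] at h1; simp [starMap] at h1
    · rw [hc] at h1
      have hy : y = 1 := by fin_cases y <;> simp_all [starMap, Fin.ext_iff]
      subst hy; exact ⟨p, rfl⟩
  obtain ⟨p2, e2⟩ : ∃ p, χ 2 = Sum.inr (p, ⟨2, by decide, by decide⟩) := by
    have h2 := hχ 2
    rcases hc : χ 2 with d | ⟨p, y, hy0, hy3⟩
    · rw [hc] at h2; simp [starMap] at h2
    · rw [hc] at h2
      have hy : y = 2 := by fin_cases y <;> simp_all [starMap, Fin.ext_iff]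
      subst hy; exact ⟨p, rfl⟩
  obtain ⟨d0, e0⟩ : ∃ d, χ 0 = Sum.inl d := by
    have h0 := hχ 0
    rcases hc : χ 0 with d | ⟨p, y, hy0, hy3⟩
    · exact ⟨d, rfl⟩
    · rw [hc] at h0
      fin_cases y <;>
        first
        | exact absurd rfl hy0
        | exact absurd rfl hy3
        | simp_all [starMap, Fin.ext_iff]
  obtain ⟨d3, e3⟩ : ∃ d, χ 3 = Sum.inl d := by
    have h3 := hχ 3
    rcases hc : χ 3 with d | ⟨p, y, hy0, hy3⟩
    · exact ⟨d, rfl⟩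
    · rw [hc] at h3
      fin_cases y <;>
        first
        | exact absurd rfl hy0
        | exact absurd rfl hy3
        | simp_all [starMap, Fin.ext_iff]
  -- edge 0–1: d0 = p1.val.1
  have a01 := χ.map_rel (show (pathGraph 4).Adj 0 1 by rw [pathGraph_adj]; decide)
  have a12 := χ.map_rel (show (pathGraph 4).Adj 1 2 by rw [pathGraph_adj]; decide)
  have a23 := χ.map_rel (show (pathGraph 4).Adj 2 3 by rw [pathGraph_adj]; decide)
  simp only [_root_.starGraph, fromRel_adj] at a01 a12 a23
  erw [e0, e1] at a01
  erw [e1, e2] at a12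
  erw [e2, e3] at a23
  clear hχ hD
  have hd0 : d0 = p1.val.1 := by
    rcases a01.2 with ⟨u, v, huv, s, t, hst, hs, ht⟩ | ⟨u, v, huv, s, t, hst, hs, ht⟩
    · obtain ⟨hq, hty⟩ := phi_eq_inr ht
      obtain ⟨rfl, rfl⟩ | ⟨rfl, rfl⟩ := phi_eq_inl hs
      · rw [hq]
      · rw [pathGraph_adj] at hst
        rw [← hty] at hst
        simp [show ((3:Fin 4):ℕ) = 3 from rfl, show ((0:Fin 4):ℕ) = 0 from rfl] at hst
    · obtain ⟨hq, hty⟩ := phi_eq_inr hs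
      obtain ⟨rfl, rfl⟩ | ⟨rfl, rfl⟩ := phi_eq_inl ht
      · rw [hq]
      · rw [pathGraph_adj] at hst
        rw [← hty] at hst
        simp [show ((3:Fin 4):ℕ) = 3 from rfl, show ((0:Fin 4):ℕ) = 0 from rfl] at hst
  have hp : p1 = p2 := by
    rcases a12.2 with ⟨u, v, huv, s, t, hst, hs, ht⟩ | ⟨u, v, huv, s, t, hst, hs, ht⟩
    · obtain ⟨hq1, -⟩ := phi_eq_inr hs
      obtain ⟨hq2, -⟩ := phi_eq_inr ht
      exact Subtype.ext (hq1.trans hq2.symm)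
    · obtain ⟨hq1, -⟩ := phi_eq_inr ht
      obtain ⟨hq2, -⟩ := phi_eq_inr hs
      exact Subtype.ext (hq1.trans hq2.symm)
  have hd3 : d3 = p1.val.2 := by
    rcases a23.2 with ⟨u, v, huv, s, t, hst, hs, ht⟩ | ⟨u, v, huv, s, t, hst, hs, ht⟩
    · obtain ⟨hq, hty⟩ := phi_eq_inr hs
      obtain ⟨rfl, rfl⟩ | ⟨rfl, rfl⟩ := phi_eq_inl ht
      · rw [pathGraph_adj] at hst
        rw [← hty] at hst
        simp [show ((3:Fin 4):ℕ) = 3 from rfl, show ((0:Fin 4):ℕ) = 0 from rfl] at hst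
      · rw [hp]; exact (congrArg Prod.snd hq).symm
    · obtain ⟨hq, hty⟩ := phi_eq_inr ht
      obtain ⟨rfl, rfl⟩ | ⟨rfl, rfl⟩ := phi_eq_inl hs
      · rw [pathGraph_adj] at hst
        rw [← hty] at hst
        simp [show ((3:Fin 4):ℕ) = 3 from rfl, show ((0:Fin 4):ℕ) = 0 from rfl] at hst
      · rw [hp]; exact (congrArg Prod.snd hq).symm
  refine ⟨p1.val.1, p1.val.2, p1.prop, ?_⟩
  intro x
  fin_cases x
  · show χ 0 = _
    rw [e0, hd0]; exact phi_zero.symm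
  · show χ 1 = _
    rw [e1]; exact phi_one.symm
  · show χ 2 = _
    rw [e2, ← hp]; exact phi_two.symm
  · show χ 3 = _
    rw [e3, hd3]; exact phi_three.symm
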